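/- Let d, K, L, M, N ≥ 1 be natural numbers and let w_{k,l,m}, x_{k,l,n} ∈ ℝ^d for k ∈ {1,…,K}, l ∈ {1,…,L}, m ∈ {1,…,M}, n ∈ {1,…,N}. Let β ≥ 0 and G_w, G_x > 0 be reals. Suppose that for every k ∈ {1,…,K}: (i) ∑_{j=1}^{k} ( ∑_{(l,m,n) ∈ [L]×[M]×[N]} |w_{k,l,m}ᵀ x_{j,l,n}| )² ≤ β, (ii) ∑_{l=1}^{L} ∑_{m=1}^{M} ‖w_{k,l,m}‖₁ ≤ G_w, and (iii) ∑_{l=1}^{L} ∑_{n=1}^{N} ‖x_{k,l,n}‖₁ ≤ G_x. Then for every λ > 0, ∑_{k=1}^{K} ∑_{(l,m,n) ∈ [L]×[M]×[N]} |w_{k,l,m}ᵀ x_{k,l,n}| ≤ √((λ + β) · d L M K · log(1 + M G_w² G_x² K / (d L λ))). -/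

import Mathlib

set_option linter.unusedSectionVars false
set_option maxHeartbeats 1000000
open Matrix Finset

section IcdAux

variable {ι : Type*} [Fintype ι] [DecidableEq ι]

lemma icd_outer_mulVec (v y : ι → ℝ) : vecMulVec v v *ᵥ y = (v ⬝ᵥ y) • v := by
  ext i
  simp [vecMulVec_apply, mulVec, dotProduct, Finset.sum_mul, Finset.mul_sum, mul_comm, mul_assoc,
    mul_left_comm]

lemma icd_quad_outer (v y : ι → ℝ) : y ⬝ᵥ (vecMulVec v v *ᵥ y) = (v ⬝ᵥ y) ^ 2 := by
  rw [icd_outer_mulVec, dotProduct_smul, smul_eq_mul, dotProduct_comm, sq]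

lemma icd_outer_posSemidef (v : ι → ℝ) : (vecMulVec v v).PosSemidef := by
  refine PosSemidef.of_dotProduct_mulVec_nonneg ?_ ?_
  · ext i j
    simp [conjTranspose_apply, vecMulVec_apply, mul_comm]
  · intro y
    simp only [star_trivial]
    rw [icd_quad_outer]
    positivity

lemma icd_smul_one_posDef {c : ℝ} (hc : 0 < c) : (c • (1 : Matrix ι ι ℝ)).PosDef := by
  refine PosDef.of_dotProduct_mulVec_pos ?_ ?_
  · ext i j
    simp [conjTranspose_apply, Matrix.one_apply, eq_comm]
  · intro y hy
    simp only [star_trivial, smul_mulVec, one_mulVec, dotProduct_smul, smul_eq_mul]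
    have hyy : 0 < y ⬝ᵥ y := by
      obtain ⟨i, hi⟩ := Function.ne_iff.mp hy
      have h1 : 0 < y i * y i := mul_self_pos.mpr hi
      have h2 : ∀ j ∈ Finset.univ, 0 ≤ y j * y j := fun j _ => mul_self_nonneg _
      calc (0:ℝ) < y i * y i := h1
        _ ≤ ∑ j, y j * y j := Finset.single_le_sum h2 (Finset.mem_univ i)
        _ = y ⬝ᵥ y := rfl
    exact mul_pos hc hyy

lemma icd_psd_sum {α : Type*} (s : Finset α) (f : α → Matrix ι ι ℝ)
    (h : ∀ a ∈ s, (f a).PosSemidef) : (∑ a ∈ s, f a).PosSemidef := by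
  induction s using Finset.cons_induction with
  | empty => simpa using Matrix.PosSemidef.zero
  | cons a s ha ih =>
      rw [Finset.sum_cons]
      exact (h a (Finset.mem_cons_self a s)).add
        (ih fun b hb => h b (Finset.mem_cons_of_mem hb))

lemma icd_herm_dot_symm {A : Matrix ι ι ℝ} (hA : A.IsHermitian) (a b : ι → ℝ) :
    a ⬝ᵥ A *ᵥ b = b ⬝ᵥ A *ᵥ a := by
  have hsym : ∀ i j, A i j = A j i := by
    intro i j
    conv_lhs => rw [← hA]
    simp [conjTranspose_apply]
  simp only [dotProduct, mulVec, Finset.mul_sum]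
  rw [Finset.sum_comm]
  refine Finset.sum_congr rfl fun i _ => Finset.sum_congr rfl fun j _ => ?_
  rw [hsym j i]; ring

lemma icd_psd_cauchy_schwarz {A : Matrix ι ι ℝ} (hA : A.PosSemidef) (a b : ι → ℝ) :
    (a ⬝ᵥ A *ᵥ b) ^ 2 ≤ (a ⬝ᵥ A *ᵥ a) * (b ⬝ᵥ A *ᵥ b) := by
  have key : ∀ t : ℝ, 0 ≤ (a ⬝ᵥ A *ᵥ a) * (t * t) + (2 * (a ⬝ᵥ A *ᵥ b)) * t + b ⬝ᵥ A *ᵥ b := by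
    intro t
    have h := hA.dotProduct_mulVec_nonneg (t • a + b)
    simp only [star_trivial] at h
    have hexp : (t • a + b) ⬝ᵥ A *ᵥ (t • a + b)
        = (a ⬝ᵥ A *ᵥ a) * (t * t) + (2 * (a ⬝ᵥ A *ᵥ b)) * t + b ⬝ᵥ A *ᵥ b := by
      rw [mulVec_add, mulVec_smul, dotProduct_add, add_dotProduct, add_dotProduct,
        smul_dotProduct, smul_dotProduct, dotProduct_smul, dotProduct_smul,
        icd_herm_dot_symm hA.1 b a]
      simp only [smul_eq_mul]
      ring
    rw [hexp] at h
    exact h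
  have hd := discrim_le_zero key
  rw [discrim] at hd
  nlinarith [hd]

lemma icd_row_inv_col {V : Matrix ι ι ℝ} (φ : ι → ℝ) :
    (replicateRow Unit φ * V⁻¹ * replicateCol Unit φ) default default = φ ⬝ᵥ V⁻¹ *ᵥ φ := by
  simp only [Matrix.mul_apply, replicateRow_apply, replicateCol_apply, dotProduct, mulVec, Finset.sum_mul,
    Finset.mul_sum]
  rw [Finset.sum_comm]
  simp [mul_assoc]

lemma icd_step_det {V : Matrix ι ι ℝ} (hV : V.PosDef) (φ : ι → ℝ) :
    (V + vecMulVec φ φ).det = V.det * (1 + φ ⬝ᵥ V⁻¹ *ᵥ φ) := by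
  have hdet : IsUnit V.det := hV.det_pos.ne'.isUnit
  rw [vecMulVec_eq Unit, det_add_replicateCol_mul_replicateRow hdet]
  congr 1
  rw [det_unique, Matrix.add_apply, Matrix.one_apply_eq, icd_row_inv_col]

lemma icd_step_inv {V : Matrix ι ι ℝ} (φ : ι → ℝ) (hV : V.PosDef)
    (hB : (V + vecMulVec φ φ).PosDef) :
    φ ⬝ᵥ (V + vecMulVec φ φ)⁻¹ *ᵥ φ
      = (φ ⬝ᵥ V⁻¹ *ᵥ φ) / (1 + φ ⬝ᵥ V⁻¹ *ᵥ φ) := by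
  have hu : 0 ≤ φ ⬝ᵥ V⁻¹ *ᵥ φ := by
    have := hV.inv.posSemidef.dotProduct_mulVec_nonneg φ
    simpa using this
  set u := φ ⬝ᵥ V⁻¹ *ᵥ φ with hu_def
  have h1u : (0:ℝ) < 1 + u := by linarith
  set y := V⁻¹ *ᵥ φ with hy
  have hVy : V *ᵥ y = φ := by
    rw [hy, mulVec_mulVec, Matrix.mul_nonsing_inv _ hV.det_pos.ne'.isUnit, one_mulVec]
  have hBy : (V + vecMulVec φ φ) *ᵥ ((1 + u)⁻¹ • y) = φ := by
    rw [mulVec_smul, add_mulVec, hVy, icd_outer_mulVec, ← hu_def]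
    have h2 : φ + u • φ = (1 + u) • φ := by rw [add_smul, one_smul]
    rw [h2, smul_smul, inv_mul_cancel₀ h1u.ne', one_smul]
  have hinv : (V + vecMulVec φ φ)⁻¹ *ᵥ φ = (1 + u)⁻¹ • y := by
    have := congrArg (fun z => (V + vecMulVec φ φ)⁻¹ *ᵥ z) hBy
    simpa [mulVec_mulVec, Matrix.nonsing_inv_mul _ hB.det_pos.ne'.isUnit, one_mulVec]
      using this.symm
  rw [hinv, dotProduct_smul, smul_eq_mul, ← hu_def, div_eq_inv_mul]

lemma icd_step_log {V : Matrix ι ι ℝ} (φ : ι → ℝ) (hV : V.PosDef)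
    (hB : (V + vecMulVec φ φ).PosDef) :
    φ ⬝ᵥ (V + vecMulVec φ φ)⁻¹ *ᵥ φ
      ≤ Real.log (V + vecMulVec φ φ).det - Real.log V.det := by
  have hu : 0 ≤ φ ⬝ᵥ V⁻¹ *ᵥ φ := by
    have := hV.inv.posSemidef.dotProduct_mulVec_nonneg φ
    simpa using this
  set u := φ ⬝ᵥ V⁻¹ *ᵥ φ with hu_def
  have h1u : (0:ℝ) < 1 + u := by linarith
  have hlog : Real.log (V + vecMulVec φ φ).det - Real.log V.det = Real.log (1 + u) := by
    rw [icd_step_det hV φ, ← hu_def, Real.log_mul hV.det_pos.ne' h1u.ne']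
    ring
  rw [icd_step_inv φ hV hB, ← hu_def, hlog]
  have h3 : Real.log (1 + u)⁻¹ ≤ (1 + u)⁻¹ - 1 := Real.log_le_sub_one_of_pos (by positivity)
  rw [Real.log_inv] at h3
  have h4 : u / (1 + u) = 1 - (1 + u)⁻¹ := by field_simp; ring
  rw [h4]
  linarith

lemma icd_trace_eq_sum_eigenvalues {A : Matrix ι ι ℝ} (hA : A.IsHermitian) :
    A.trace = ∑ i, hA.eigenvalues i := by
  simpa using hA.trace_eq_sum_eigenvalues

lemma icd_det_le_pow_trace {A : Matrix ι ι ℝ} (hA : A.PosDef) (hn : 0 < Fintype.card ι) :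
    A.det ≤ (A.trace / Fintype.card ι) ^ (Fintype.card ι) := by
  set n := Fintype.card ι with hn_def
  have hnR : (0:ℝ) < (n:ℝ) := by exact_mod_cast hn
  set z : ι → ℝ := fun i => hA.isHermitian.eigenvalues i with hz_def
  have hz : ∀ i, 0 < z i := fun i => hA.eigenvalues_pos i
  have hdet : A.det = ∏ i, z i := by
    have := hA.isHermitian.det_eq_prod_eigenvalues
    simpa using this
  have htr : A.trace = ∑ i, z i := icd_trace_eq_sum_eigenvalues hA.isHermitian
  have hgm : ∏ i, z i ^ ((n:ℝ)⁻¹) ≤ ∑ i, ((n:ℝ)⁻¹) * z i :=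
    Real.geom_mean_le_arith_mean_weighted univ _ z (fun _ _ => by positivity)
      (by simp [Finset.sum_const, hn_def]; exact div_self (Nat.cast_ne_zero.mpr hn.ne')) (fun i _ => (hz i).le)
  have hrhs : ∑ i, ((n:ℝ)⁻¹) * z i = A.trace / n := by
    rw [htr, ← Finset.mul_sum]; ring
  have hpow : ∀ i, (z i ^ ((n:ℝ)⁻¹)) ^ (n:ℕ) = z i := by
    intro i
    rw [← Real.rpow_natCast (z i ^ ((n:ℝ)⁻¹)) n, ← Real.rpow_mul (hz i).le,
      inv_mul_cancel₀ hnR.ne', Real.rpow_one]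
  calc A.det = ∏ i, z i := hdet
    _ = ∏ i, (z i ^ ((n:ℝ)⁻¹)) ^ (n:ℕ) := by simp [hpow]
    _ = (∏ i, z i ^ ((n:ℝ)⁻¹)) ^ (n:ℕ) := by rw [Finset.prod_pow]
    _ ≤ (∑ i, ((n:ℝ)⁻¹) * z i) ^ (n:ℕ) := by
        apply pow_le_pow_left₀ (Finset.prod_nonneg fun i _ => Real.rpow_nonneg (hz i).le _) hgm
    _ = (A.trace / n) ^ (n:ℕ) := by rw [hrhs]

lemma icd_trace_vecMulVec (v : ι → ℝ) : (vecMulVec v v).trace = v ⬝ᵥ v := by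
  simp [Matrix.trace, Matrix.diag, vecMulVec_apply, dotProduct]

lemma icd_dot_sum_mulVec {α : Type*} (s : Finset α) (f : α → Matrix ι ι ℝ) (y : ι → ℝ) :
    y ⬝ᵥ (∑ a ∈ s, f a) *ᵥ y = ∑ a ∈ s, y ⬝ᵥ (f a) *ᵥ y := by
  induction s using Finset.cons_induction with
  | empty => simp
  | cons a s ha ih =>
      rw [Finset.sum_cons, Finset.sum_cons, add_mulVec, dotProduct_add, ih]

lemma icd_sum_swap4 {A B C E : Type*} [Fintype A] [Fintype B] [Fintype C] [Fintype E]
    (F : A → B → C → E → ℝ) :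
    ∑ a, ∑ b, ∑ c, ∑ e, F a b c e = ∑ e, ∑ a, ∑ b, ∑ c, F a b c e := by
  have h1 : ∀ a, ∑ b, ∑ c, ∑ e, F a b c e = ∑ e, ∑ b, ∑ c, F a b c e := by
    intro a
    have h2 : ∀ b, ∑ c, ∑ e, F a b c e = ∑ e, ∑ c, F a b c e := fun b => Finset.sum_comm
    rw [Finset.sum_congr rfl fun b _ => h2 b, Finset.sum_comm]
  rw [Finset.sum_congr rfl fun a _ => h1 a, Finset.sum_comm]

lemma icd_sum_swap3 {A B C : Type*} [Fintype A] [Fintype B] [Fintype C]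
    (F : A → B → C → ℝ) :
    ∑ a, ∑ b, ∑ c, F a b c = ∑ b, ∑ c, ∑ a, F a b c := by
  rw [Finset.sum_comm]
  exact Finset.sum_congr rfl fun b _ => Finset.sum_comm

end IcdAux

section Main

/-- **Proposition 9** (key technical index-change result).  Given vectors
`w_{k,l,m}, x_{k,l,n} ∈ ℝ^d` with `∑_{j=1}^k (∑_{l,m,n} |w_{k,l,m}ᵀ x_{j,l,n}|)² ≤ β`,
`∑_{l,m} ‖w_{k,l,m}‖₁ ≤ G_w` and `∑_{l,n} ‖x_{k,l,n}‖₁ ≤ G_x` for all `k`,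
then for every `λ > 0`,
`∑_k ∑_{l,m,n} |w_{k,l,m}ᵀ x_{k,l,n}| ≤ √((λ+β) d L M K log(1 + M G_w² G_x² K/(d L λ)))`. -/
theorem index_change_deluxe
    (d K L M N : ℕ) (hd : 1 ≤ d) (hK : 1 ≤ K) (hL : 1 ≤ L) (hM : 1 ≤ M) (hN : 1 ≤ N)
    (β Gw Gx : ℝ) (hβ : 0 ≤ β) (hGw : 0 < Gw) (hGx : 0 < Gx)
    (w : Fin K → Fin L → Fin M → Fin d → ℝ)
    (x : Fin K → Fin L → Fin N → Fin d → ℝ)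
    (hsum : ∀ k : Fin K, ∑ j ∈ Finset.Iic k,
      (∑ l : Fin L, ∑ m : Fin M, ∑ n : Fin N, |∑ i, w k l m i * x j l n i|) ^ 2 ≤ β)
    (hw : ∀ k : Fin K, ∑ l : Fin L, ∑ m : Fin M, ∑ i, |w k l m i| ≤ Gw)
    (hx : ∀ k : Fin K, ∑ l : Fin L, ∑ n : Fin N, ∑ i, |x k l n i| ≤ Gx) :
    ∀ lam : ℝ, 0 < lam →
      ∑ k : Fin K, ∑ l : Fin L, ∑ m : Fin M, ∑ n : Fin N, |∑ i, w k l m i * x k l n i| ≤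
        Real.sqrt ((lam + β) * (d * L * M * K) *
          Real.log (1 + M * Gw ^ 2 * Gx ^ 2 * K / (d * L * lam))) := by
  intro lam hlam
  classical
  -- signs
  set σ : Fin K → Fin L → Fin M → Fin N → ℝ :=
    fun k l m n => if 0 ≤ ∑ i, w k l m i * x k l n i then 1 else -1 with hσ
  have hσabs : ∀ k l m n, |σ k l m n| = 1 := by
    intro k l m n
    simp only [hσ]
    split_ifs <;> norm_num
  -- vectors
  set θ : Fin K → (Fin d × Fin L × Fin M) → ℝ := fun k p => w k p.2.1 p.2.2 p.1 with hθ
  set φ : Fin K → (Fin d × Fin L × Fin M) → ℝ :=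
    fun k p => ∑ n, σ k p.2.1 p.2.2 n * x k p.2.1 n p.1 with hφ
  -- rearrangement
  have key : ∀ (k j : Fin K),
      θ k ⬝ᵥ φ j = ∑ l, ∑ m, ∑ n, σ j l m n * ∑ i, w k l m i * x j l n i := by
    intro k j
    have expand : θ k ⬝ᵥ φ j
        = ∑ i : Fin d, ∑ l, ∑ m, ∑ n, σ j l m n * (w k l m i * x j l n i) := by
      simp only [hθ, hφ, dotProduct, Fintype.sum_prod_type]
      refine Finset.sum_congr rfl fun i _ => Finset.sum_congr rfl fun l _ =>
        Finset.sum_congr rfl fun m _ => ?_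
      rw [Finset.mul_sum]
      exact Finset.sum_congr rfl fun n _ => by ring
    rw [expand, ← icd_sum_swap4 (fun l m n i => σ j l m n * (w k l m i * x j l n i))]
    exact Finset.sum_congr rfl fun l _ => Finset.sum_congr rfl fun m _ =>
      Finset.sum_congr rfl fun n _ => by rw [Finset.mul_sum]
  -- diagonal identity
  have hdiag : ∀ k : Fin K,
      θ k ⬝ᵥ φ k = ∑ l, ∑ m, ∑ n, |∑ i, w k l m i * x k l n i| := by
    intro k
    rw [key k k]
    refine Finset.sum_congr rfl fun l _ => Finset.sum_congr rfl fun m _ =>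
      Finset.sum_congr rfl fun n _ => ?_
    simp only [hσ]
    split_ifs with h
    · rw [one_mul, abs_of_nonneg h]
    · rw [neg_one_mul, abs_of_neg (lt_of_not_ge h)]
  -- absolute bound
  have habs : ∀ k j : Fin K,
      |θ k ⬝ᵥ φ j| ≤ ∑ l, ∑ m, ∑ n, |∑ i, w k l m i * x j l n i| := by
    intro k j
    rw [key k j]
    have tri : ∀ (f : Fin L → Fin M → Fin N → ℝ),
        |∑ l, ∑ m, ∑ n, f l m n| ≤ ∑ l, ∑ m, ∑ n, |f l m n| := by
      intro f
      refine (Finset.abs_sum_le_sum_abs _ _).trans (Finset.sum_le_sum fun l _ => ?_)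
      refine (Finset.abs_sum_le_sum_abs _ _).trans (Finset.sum_le_sum fun m _ => ?_)
      exact Finset.abs_sum_le_sum_abs _ _
    refine (tri _).trans (le_of_eq ?_)
    refine Finset.sum_congr rfl fun l _ => Finset.sum_congr rfl fun m _ =>
      Finset.sum_congr rfl fun n _ => ?_
    rw [abs_mul, hσabs, one_mul]
  -- quadratic constraint
  have hquad : ∀ k : Fin K, ∑ j ∈ Finset.Iic k, (θ k ⬝ᵥ φ j) ^ 2 ≤ β := by
    intro k
    refine le_trans (Finset.sum_le_sum fun j _ => ?_) (hsum k)
    calc (θ k ⬝ᵥ φ j) ^ 2 = |θ k ⬝ᵥ φ j| ^ 2 := (sq_abs _).symm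
      _ ≤ (∑ l, ∑ m, ∑ n, |∑ i, w k l m i * x j l n i|) ^ 2 :=
          pow_le_pow_left₀ (abs_nonneg _) (habs k j) 2
  -- norm bounds
  have hθθ : ∀ k : Fin K, θ k ⬝ᵥ θ k ≤ Gw ^ 2 := by
    intro k
    have e1 : θ k ⬝ᵥ θ k = ∑ p, |θ k p| ^ 2 := by
      refine Finset.sum_congr rfl fun p _ => ?_
      rw [sq_abs, sq]
    have e2 : ∑ p, |θ k p| ≤ Gw := by
      have e3 : ∑ p, |θ k p| = ∑ l, ∑ m, ∑ i, |w k l m i| := by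
        simp only [hθ, Fintype.sum_prod_type]
        exact icd_sum_swap3 (fun i l m => |w k l m i|)
      rw [e3]; exact hw k
    calc θ k ⬝ᵥ θ k = ∑ p, |θ k p| ^ 2 := e1
      _ ≤ (∑ p, |θ k p|) ^ 2 := Finset.sum_sq_le_sq_sum_of_nonneg fun p _ => abs_nonneg _
      _ ≤ Gw ^ 2 := pow_le_pow_left₀ (Finset.sum_nonneg fun p _ => abs_nonneg _) e2 2
  have hφφ : ∀ k : Fin K, φ k ⬝ᵥ φ k ≤ M * Gx ^ 2 := by
    intro k
    have e1 : φ k ⬝ᵥ φ k ≤ ∑ p : Fin d × Fin L × Fin M, (∑ n, |x k p.2.1 n p.1|) ^ 2 := by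
      refine Finset.sum_le_sum fun p _ => ?_
      have h1 : |φ k p| ≤ ∑ n, |x k p.2.1 n p.1| := by
        simp only [hφ]
        refine (Finset.abs_sum_le_sum_abs _ _).trans (le_of_eq ?_)
        refine Finset.sum_congr rfl fun n _ => ?_
        rw [abs_mul, hσabs, one_mul]
      calc φ k p * φ k p = |φ k p| ^ 2 := by rw [sq_abs, sq]
        _ ≤ (∑ n, |x k p.2.1 n p.1|) ^ 2 :=
            pow_le_pow_left₀ (abs_nonneg _) h1 2
    have e2 : ∑ p : Fin d × Fin L × Fin M, (∑ n, |x k p.2.1 n p.1|) ^ 2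
        = M * ∑ q : Fin d × Fin L, (∑ n, |x k q.2 n q.1|) ^ 2 := by
      simp only [Fintype.sum_prod_type, Finset.mul_sum]
      refine Finset.sum_congr rfl fun i _ => Finset.sum_congr rfl fun l _ => ?_
      simp [Finset.sum_const, nsmul_eq_mul, mul_comm]
    have e3 : ∑ q : Fin d × Fin L, (∑ n, |x k q.2 n q.1|) ^ 2
        ≤ (∑ q : Fin d × Fin L, ∑ n, |x k q.2 n q.1|) ^ 2 :=
      Finset.sum_sq_le_sq_sum_of_nonneg fun q _ =>
        Finset.sum_nonneg fun n _ => abs_nonneg _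
    have e4 : ∑ q : Fin d × Fin L, ∑ n, |x k q.2 n q.1| ≤ Gx := by
      have e5 : ∑ q : Fin d × Fin L, ∑ n, |x k q.2 n q.1|
          = ∑ l, ∑ n, ∑ i, |x k l n i| := by
        rw [Fintype.sum_prod_type]
        exact icd_sum_swap3 (fun i l n => |x k l n i|)
      rw [e5]; exact hx k
    calc φ k ⬝ᵥ φ k ≤ ∑ p : Fin d × Fin L × Fin M, (∑ n, |x k p.2.1 n p.1|) ^ 2 := e1
      _ = M * ∑ q : Fin d × Fin L, (∑ n, |x k q.2 n q.1|) ^ 2 := e2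
      _ ≤ M * (∑ q : Fin d × Fin L, ∑ n, |x k q.2 n q.1|) ^ 2 := by
          have : (0:ℝ) ≤ M := by positivity
          exact mul_le_mul_of_nonneg_left e3 this
      _ ≤ M * Gx ^ 2 := by
          have hq : (0:ℝ) ≤ ∑ q : Fin d × Fin L, ∑ n, |x k q.2 n q.1| :=
            Finset.sum_nonneg fun q _ => Finset.sum_nonneg fun n _ => abs_nonneg _
          have := pow_le_pow_left₀ hq e4 2
          have hM0 : (0:ℝ) ≤ M := by positivity
          exact mul_le_mul_of_nonneg_left this hM0
  -- matrix potential argument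
  have hGw2 : (0:ℝ) < Gw ^ 2 := by positivity
  set lam' : ℝ := lam / Gw ^ 2 with hlam'def
  have hlam' : 0 < lam' := by positivity
  set Vf : ℕ → Matrix (Fin d × Fin L × Fin M) (Fin d × Fin L × Fin M) ℝ :=
    fun t => lam' • 1 + ∑ j ∈ Finset.univ.filter (fun j : Fin K => (j:ℕ) < t),
      vecMulVec (φ j) (φ j) with hVf
  have hVpos : ∀ t, (Vf t).PosDef := fun t =>
    (icd_smul_one_posDef hlam').add_posSemidef
      (icd_psd_sum _ _ fun j _ => icd_outer_posSemidef (φ j))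
  have hfilter_succ : ∀ k : Fin K, Finset.univ.filter (fun j : Fin K => (j:ℕ) < (k:ℕ)+1)
      = insert k (Finset.univ.filter (fun j : Fin K => (j:ℕ) < (k:ℕ))) := by
    intro k
    ext j
    simp only [Finset.mem_filter, Finset.mem_univ, true_and, Finset.mem_insert,
      Nat.lt_succ_iff_lt_or_eq, Fin.val_eq_val]
    tauto
  have hVsucc : ∀ k : Fin K, Vf ((k:ℕ)+1) = Vf (k:ℕ) + vecMulVec (φ k) (φ k) := by
    intro k
    simp only [hVf]
    rw [hfilter_succ k, Finset.sum_insert (by simp)]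
    abel
  have hIicEq : ∀ k : Fin K, Finset.univ.filter (fun j : Fin K => (j:ℕ) < (k:ℕ)+1)
      = Finset.Iic k := by
    intro k
    ext j
    simp only [Finset.mem_filter, Finset.mem_univ, true_and, Finset.mem_Iic,
      Nat.lt_succ_iff, Fin.le_def]
  have hquadθ : ∀ k : Fin K, θ k ⬝ᵥ (Vf ((k:ℕ)+1)) *ᵥ θ k ≤ lam + β := by
    intro k
    have e1 : θ k ⬝ᵥ (Vf ((k:ℕ)+1)) *ᵥ θ k
        = lam' * (θ k ⬝ᵥ θ k) + ∑ j ∈ Finset.Iic k, (θ k ⬝ᵥ φ j) ^ 2 := by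
      simp only [hVf]
      rw [add_mulVec, dotProduct_add, icd_dot_sum_mulVec]
      congr 1
      · rw [smul_mulVec, one_mulVec, dotProduct_smul, smul_eq_mul]
      · rw [hIicEq k]
        refine Finset.sum_congr rfl fun j _ => ?_
        rw [icd_quad_outer, dotProduct_comm]
    rw [e1]
    have h2 : lam' * (θ k ⬝ᵥ θ k) ≤ lam' * Gw ^ 2 :=
      mul_le_mul_of_nonneg_left (hθθ k) hlam'.le
    have h3 : lam' * Gw ^ 2 = lam := by
      rw [hlam'def]; field_simp
    linarith [hquad k]
  set g : Fin K → ℝ := fun k => φ k ⬝ᵥ (Vf ((k:ℕ)+1))⁻¹ *ᵥ φ k with hgdef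
  have hg0 : ∀ k, 0 ≤ g k := by
    intro k
    have := (hVpos ((k:ℕ)+1)).inv.posSemidef.dotProduct_mulVec_nonneg (φ k)
    simpa [hgdef] using this
  have hglog : ∀ k : Fin K, g k ≤ Real.log (Vf ((k:ℕ)+1)).det - Real.log (Vf (k:ℕ)).det := by
    intro k
    have hB : (Vf (k:ℕ) + vecMulVec (φ k) (φ k)).PosDef := by
      rw [← hVsucc k]; exact hVpos _
    have h := icd_step_log (φ k) (hVpos (k:ℕ)) hB
    rw [← hVsucc k] at h
    simpa [hgdef] using h
  have htel : ∑ k : Fin K, g k ≤ Real.log (Vf K).det - Real.log (Vf 0).det := by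
    calc ∑ k : Fin K, g k
        ≤ ∑ k : Fin K, (Real.log (Vf ((k:ℕ)+1)).det - Real.log (Vf (k:ℕ)).det) :=
          Finset.sum_le_sum fun k _ => hglog k
      _ = ∑ t ∈ Finset.range K, (Real.log (Vf (t+1)).det - Real.log (Vf t).det) :=
          Fin.sum_univ_eq_sum_range
            (fun t => Real.log (Vf (t+1)).det - Real.log (Vf t).det) K
      _ = Real.log (Vf K).det - Real.log (Vf 0).det :=
          Finset.sum_range_sub (fun t => Real.log (Vf t).det) K
  -- determinant / trace bounds
  have hcard : 0 < Fintype.card (Fin d × Fin L × Fin M) := by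
    simp only [Fintype.card_prod, Fintype.card_fin]
    exact Nat.mul_pos hd (Nat.mul_pos hL hM)
  have hDcR : ((Fintype.card (Fin d × Fin L × Fin M) : ℕ) : ℝ) = (d:ℝ) * L * M := by
    simp only [Fintype.card_prod, Fintype.card_fin]
    push_cast; ring
  have hDcpos : (0:ℝ) < (Fintype.card (Fin d × Fin L × Fin M) : ℝ) := by
    exact_mod_cast hcard
  have hV0det : Real.log (Vf 0).det
      = (Fintype.card (Fin d × Fin L × Fin M) : ℝ) * Real.log lam' := by
    have h0 : Vf 0 = lam' • (1 : Matrix (Fin d × Fin L × Fin M) (Fin d × Fin L × Fin M) ℝ) := by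
      simp only [hVf]
      have : Finset.univ.filter (fun j : Fin K => (j:ℕ) < 0) = ∅ := by
        ext j; simp
      rw [this, Finset.sum_empty, add_zero]
    rw [h0, Matrix.det_smul, Matrix.det_one, mul_one, Real.log_pow]
  have hfK : Finset.univ.filter (fun j : Fin K => (j:ℕ) < K) = Finset.univ := by
    ext j; simp [j.isLt]
  have htrace : (Vf K).trace
      = lam' * (Fintype.card (Fin d × Fin L × Fin M) : ℝ) + ∑ k : Fin K, (φ k ⬝ᵥ φ k) := by
    simp only [hVf, hfK]
    rw [Matrix.trace_add, Matrix.trace_smul, Matrix.trace_one, Matrix.trace_sum, smul_eq_mul]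
    congr 1
  have hsumφφ : ∑ k : Fin K, (φ k ⬝ᵥ φ k) ≤ (K:ℝ) * ((M:ℝ) * Gx ^ 2) := by
    calc ∑ k : Fin K, (φ k ⬝ᵥ φ k) ≤ ∑ _k : Fin K, ((M:ℝ) * Gx ^ 2) :=
          Finset.sum_le_sum fun k _ => hφφ k
      _ = (K:ℝ) * ((M:ℝ) * Gx ^ 2) := by
          simp [Finset.sum_const, Finset.card_univ, nsmul_eq_mul]
  have htrace_le : (Vf K).trace
      ≤ lam' * (Fintype.card (Fin d × Fin L × Fin M) : ℝ) + (K:ℝ) * ((M:ℝ) * Gx ^ 2) := by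
    rw [htrace]; linarith
  have htrpos : 0 < (Vf K).trace := by
    rw [htrace]
    have h1 : 0 ≤ ∑ k : Fin K, (φ k ⬝ᵥ φ k) :=
      Finset.sum_nonneg fun k _ => Finset.sum_nonneg fun p _ => mul_self_nonneg _
    nlinarith [hlam', hDcpos]
  have hlogdet : Real.log (Vf K).det
      ≤ (Fintype.card (Fin d × Fin L × Fin M) : ℝ)
        * Real.log ((Vf K).trace / (Fintype.card (Fin d × Fin L × Fin M) : ℝ)) := by
    have h1 := icd_det_le_pow_trace (hVpos K) hcard
    have h2 : (0:ℝ) < (Vf K).det := (hVpos K).det_pos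
    calc Real.log (Vf K).det
        ≤ Real.log (((Vf K).trace / (Fintype.card (Fin d × Fin L × Fin M) : ℝ))
            ^ (Fintype.card (Fin d × Fin L × Fin M))) :=
          (Real.log_le_log_iff h2 (lt_of_lt_of_le h2 h1)).mpr h1
      _ = _ := Real.log_pow _ _
  have hgsum : ∑ k : Fin K, g k
      ≤ (Fintype.card (Fin d × Fin L × Fin M) : ℝ)
        * Real.log (1 + (K:ℝ) * ((M:ℝ) * Gx ^ 2)
            / ((Fintype.card (Fin d × Fin L × Fin M) : ℝ) * lam')) := by
    have harg_pos : (0:ℝ) < (Vf K).trace / ((Fintype.card (Fin d × Fin L × Fin M) : ℝ) * lam') :=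
      div_pos htrpos (by positivity)
    have hsplit : Real.log ((Vf K).trace / (Fintype.card (Fin d × Fin L × Fin M) : ℝ))
        - Real.log lam'
        = Real.log ((Vf K).trace / ((Fintype.card (Fin d × Fin L × Fin M) : ℝ) * lam')) := by
      rw [← Real.log_div (by positivity) hlam'.ne', div_div]
    have hargle : (Vf K).trace / ((Fintype.card (Fin d × Fin L × Fin M) : ℝ) * lam')
        ≤ 1 + (K:ℝ) * ((M:ℝ) * Gx ^ 2)
            / ((Fintype.card (Fin d × Fin L × Fin M) : ℝ) * lam') := by
      rw [div_le_iff₀ (by positivity)]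
      have expand : (1 + (K:ℝ) * ((M:ℝ) * Gx ^ 2)
            / ((Fintype.card (Fin d × Fin L × Fin M) : ℝ) * lam'))
          * ((Fintype.card (Fin d × Fin L × Fin M) : ℝ) * lam')
          = lam' * (Fintype.card (Fin d × Fin L × Fin M) : ℝ)
            + (K:ℝ) * ((M:ℝ) * Gx ^ 2) := by
        field_simp
      rw [expand]
      exact htrace_le
    have hlogle : Real.log ((Vf K).trace / ((Fintype.card (Fin d × Fin L × Fin M) : ℝ) * lam'))
        ≤ Real.log (1 + (K:ℝ) * ((M:ℝ) * Gx ^ 2)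
            / ((Fintype.card (Fin d × Fin L × Fin M) : ℝ) * lam')) :=
      (Real.log_le_log_iff harg_pos (lt_of_lt_of_le harg_pos hargle)).mpr hargle
    calc ∑ k : Fin K, g k ≤ Real.log (Vf K).det - Real.log (Vf 0).det := htel
      _ ≤ (Fintype.card (Fin d × Fin L × Fin M) : ℝ)
            * Real.log ((Vf K).trace / (Fintype.card (Fin d × Fin L × Fin M) : ℝ))
          - (Fintype.card (Fin d × Fin L × Fin M) : ℝ) * Real.log lam' := by
          rw [hV0det]; linarith [hlogdet]
      _ = (Fintype.card (Fin d × Fin L × Fin M) : ℝ)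
            * (Real.log ((Vf K).trace / (Fintype.card (Fin d × Fin L × Fin M) : ℝ))
              - Real.log lam') := by ring
      _ = (Fintype.card (Fin d × Fin L × Fin M) : ℝ)
            * Real.log ((Vf K).trace / ((Fintype.card (Fin d × Fin L × Fin M) : ℝ) * lam')) := by
          rw [hsplit]
      _ ≤ _ := mul_le_mul_of_nonneg_left hlogle hDcpos.le
  -- per-k sqrt bound
  have hsqrtterm : ∀ k : Fin K, θ k ⬝ᵥ φ k ≤ Real.sqrt (lam + β) * Real.sqrt (g k) := by
    intro k
    have hA := hVpos ((k:ℕ)+1)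
    have hAinv : (Vf ((k:ℕ)+1)) *ᵥ ((Vf ((k:ℕ)+1))⁻¹ *ᵥ φ k) = φ k := by
      rw [mulVec_mulVec, Matrix.mul_nonsing_inv _ hA.det_pos.ne'.isUnit, one_mulVec]
    have hcs := icd_psd_cauchy_schwarz hA.posSemidef (θ k) ((Vf ((k:ℕ)+1))⁻¹ *ᵥ φ k)
    rw [hAinv] at hcs
    have hb : ((Vf ((k:ℕ)+1))⁻¹ *ᵥ φ k) ⬝ᵥ φ k = g k := by
      simp only [hgdef]
      exact dotProduct_comm _ _
    rw [hb] at hcs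
    have h2 : (θ k ⬝ᵥ φ k) ^ 2 ≤ (lam + β) * g k :=
      hcs.trans (mul_le_mul_of_nonneg_right (hquadθ k) (hg0 k))
    have h3 : 0 ≤ θ k ⬝ᵥ φ k := by
      rw [hdiag k]
      positivity
    calc θ k ⬝ᵥ φ k = Real.sqrt ((θ k ⬝ᵥ φ k) ^ 2) := (Real.sqrt_sq h3).symm
      _ ≤ Real.sqrt ((lam + β) * g k) := Real.sqrt_le_sqrt h2
      _ = Real.sqrt (lam + β) * Real.sqrt (g k) := Real.sqrt_mul (by linarith) _
  have hgoalLHS : ∑ k : Fin K, ∑ l : Fin L, ∑ m : Fin M, ∑ n : Fin N,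
      |∑ i, w k l m i * x k l n i| = ∑ k : Fin K, θ k ⬝ᵥ φ k :=
    Finset.sum_congr rfl fun k _ => (hdiag k).symm
  have hsum_sqrt : ∑ k : Fin K, Real.sqrt (g k)
      ≤ Real.sqrt K * Real.sqrt (∑ k : Fin K, g k) := by
    have hcs := Finset.sum_mul_sq_le_sq_mul_sq Finset.univ (fun _ : Fin K => (1:ℝ))
      (fun k => Real.sqrt (g k))
    simp only [one_mul, one_pow] at hcs
    have h1 : ∑ k : Fin K, (Real.sqrt (g k)) ^ 2 = ∑ k : Fin K, g k :=
      Finset.sum_congr rfl fun k _ => Real.sq_sqrt (hg0 k)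
    have h2 : (∑ _k : Fin K, (1:ℝ)) = (K:ℝ) := by simp
    rw [h1, h2] at hcs
    have h3 : 0 ≤ ∑ k : Fin K, Real.sqrt (g k) :=
      Finset.sum_nonneg fun k _ => Real.sqrt_nonneg _
    calc ∑ k : Fin K, Real.sqrt (g k)
        = Real.sqrt ((∑ k : Fin K, Real.sqrt (g k)) ^ 2) := (Real.sqrt_sq h3).symm
      _ ≤ Real.sqrt ((K:ℝ) * ∑ k : Fin K, g k) := Real.sqrt_le_sqrt hcs
      _ = Real.sqrt K * Real.sqrt (∑ k : Fin K, g k) := Real.sqrt_mul (by positivity) _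
  -- final chain
  rw [hgoalLHS]
  have hfinal_inner : (lam + β) * ((K:ℝ) * ((Fintype.card (Fin d × Fin L × Fin M) : ℝ)
        * Real.log (1 + (K:ℝ) * ((M:ℝ) * Gx ^ 2)
          / ((Fintype.card (Fin d × Fin L × Fin M) : ℝ) * lam'))))
      ≤ (lam + β) * ((d:ℝ) * L * M * K)
        * Real.log (1 + (M:ℝ) * Gw ^ 2 * Gx ^ 2 * K / ((d:ℝ) * L * lam)) := by
    have hd' : (0:ℝ) < d := by exact_mod_cast hd
    have hL' : (0:ℝ) < L := by exact_mod_cast hL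
    have hM' : (1:ℝ) ≤ M := by exact_mod_cast hM
    have hM0 : (0:ℝ) < M := by linarith
    have hK' : (0:ℝ) ≤ K := by positivity
    have harg1 : (K:ℝ) * ((M:ℝ) * Gx ^ 2)
        / ((Fintype.card (Fin d × Fin L × Fin M) : ℝ) * lam')
        = (K:ℝ) * Gx ^ 2 * Gw ^ 2 / ((d:ℝ) * L * lam) := by
      rw [hDcR, hlam'def]
      field_simp
    have harg2 : (K:ℝ) * Gx ^ 2 * Gw ^ 2 / ((d:ℝ) * L * lam)
        ≤ (M:ℝ) * Gw ^ 2 * Gx ^ 2 * K / ((d:ℝ) * L * lam) := by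
      have hden : (0:ℝ) < (d:ℝ) * L * lam := by positivity
      rw [div_le_div_iff_of_pos_right hden]
      have h1 : (0:ℝ) ≤ ((M:ℝ) - 1) * ((K:ℝ) * Gx ^ 2 * Gw ^ 2) :=
        mul_nonneg (by linarith) (by positivity)
      nlinarith [h1]
    have hR0 : (0:ℝ) < 1 + (K:ℝ) * Gx ^ 2 * Gw ^ 2 / ((d:ℝ) * L * lam) := by positivity
    have hR1 : (0:ℝ) < 1 + (M:ℝ) * Gw ^ 2 * Gx ^ 2 * K / ((d:ℝ) * L * lam) := by positivity
    have hlogmono : Real.log (1 + (K:ℝ) * Gx ^ 2 * Gw ^ 2 / ((d:ℝ) * L * lam))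
        ≤ Real.log (1 + (M:ℝ) * Gw ^ 2 * Gx ^ 2 * K / ((d:ℝ) * L * lam)) :=
      (Real.log_le_log_iff hR0 hR1).mpr (by linarith)
    have hlb : (0:ℝ) ≤ lam + β := by linarith
    calc (lam + β) * ((K:ℝ) * ((Fintype.card (Fin d × Fin L × Fin M) : ℝ)
          * Real.log (1 + (K:ℝ) * ((M:ℝ) * Gx ^ 2)
            / ((Fintype.card (Fin d × Fin L × Fin M) : ℝ) * lam'))))
        = ((lam + β) * ((d:ℝ) * L * M * K))
          * Real.log (1 + (K:ℝ) * Gx ^ 2 * Gw ^ 2 / ((d:ℝ) * L * lam)) := by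
          rw [harg1, hDcR]; ring
      _ ≤ ((lam + β) * ((d:ℝ) * L * M * K))
          * Real.log (1 + (M:ℝ) * Gw ^ 2 * Gx ^ 2 * K / ((d:ℝ) * L * lam)) := by
          apply mul_le_mul_of_nonneg_left hlogmono
          positivity
      _ = (lam + β) * ((d:ℝ) * L * M * K)
          * Real.log (1 + (M:ℝ) * Gw ^ 2 * Gx ^ 2 * K / ((d:ℝ) * L * lam)) := by ring
  have hlb : (0:ℝ) ≤ lam + β := by linarith
  have hK0 : (0:ℝ) ≤ (K:ℝ) := by positivity
  calc ∑ k : Fin K, θ k ⬝ᵥ φ k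
      ≤ ∑ k : Fin K, Real.sqrt (lam + β) * Real.sqrt (g k) :=
        Finset.sum_le_sum fun k _ => hsqrtterm k
    _ = Real.sqrt (lam + β) * ∑ k : Fin K, Real.sqrt (g k) := by rw [Finset.mul_sum]
    _ ≤ Real.sqrt (lam + β) * (Real.sqrt K * Real.sqrt (∑ k : Fin K, g k)) :=
        mul_le_mul_of_nonneg_left hsum_sqrt (Real.sqrt_nonneg _)
    _ ≤ Real.sqrt (lam + β) * (Real.sqrt K
          * Real.sqrt ((Fintype.card (Fin d × Fin L × Fin M) : ℝ)
            * Real.log (1 + (K:ℝ) * ((M:ℝ) * Gx ^ 2)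
              / ((Fintype.card (Fin d × Fin L × Fin M) : ℝ) * lam')))) := by
        have h4 := Real.sqrt_le_sqrt hgsum
        exact mul_le_mul_of_nonneg_left
          (mul_le_mul_of_nonneg_left h4 (Real.sqrt_nonneg _)) (Real.sqrt_nonneg _)
    _ = Real.sqrt ((lam + β) * ((K:ℝ) * ((Fintype.card (Fin d × Fin L × Fin M) : ℝ)
          * Real.log (1 + (K:ℝ) * ((M:ℝ) * Gx ^ 2)
            / ((Fintype.card (Fin d × Fin L × Fin M) : ℝ) * lam'))))) := by
        rw [Real.sqrt_mul hlb, Real.sqrt_mul hK0]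
    _ ≤ Real.sqrt ((lam + β) * ((d:ℝ) * L * M * K)
          * Real.log (1 + (M:ℝ) * Gw ^ 2 * Gx ^ 2 * K / ((d:ℝ) * L * lam))) :=
        Real.sqrt_le_sqrt hfinal_inner

end Main
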